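/- Let K be a field of prime characteristic p and let R be an additive subgroup of K such that x^p ∈ R for every x ∈ K and c^p·r ∈ R for every c ∈ K and r ∈ R. Then the set S = {a ∈ K : a·r ∈ R for all r ∈ R} is a subfield of K containing K^p = {x^p : x ∈ K} (in particular S is closed under multiplicative inverses of its nonzero elements), and R is closed under multiplication by elements of S, i.e. R is an S-subspace of K. -/

import Mathlib

noncomputable section

/-- Let `K` have prime characteristic `p` and let `R` be an additive subgroup of `K`
containing `K^p` and stable under multiplication by `p`-th powers. Then the
multiplicative stabilizer `S = {a ∈ K : a·R ⊆ R}` is a subfield of `K` containing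
`K^p`, and `R` is an `S`-subspace of `K` (closed under multiplication by `S`). -/
theorem stabilizer_is_subfield
    {K : Type*} [Field K] (p : ℕ) (hp : p.Prime) [CharP K p]
    (R : AddSubgroup K)
    (hRp : ∀ x : K, x ^ p ∈ R)
    (hRmul : ∀ c : K, ∀ r ∈ R, c ^ p * r ∈ R) :
    ∃ S : Subfield K,
      (S : Set K) = {a : K | ∀ r ∈ R, a * r ∈ R} ∧
      (∀ x : K, x ^ p ∈ S) ∧
      ∀ a ∈ S, ∀ r ∈ R, a * r ∈ R := by
  have pow_stab : ∀ a : K, (∀ r ∈ R, a * r ∈ R) → ∀ n : ℕ, ∀ r ∈ R, a ^ n * r ∈ R := by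
    intro a ha n
    induction n with
    | zero => intro r hr; simpa using hr
    | succ n ih =>
      intro r hr
      rw [pow_succ', mul_assoc]
      exact ha _ (ih r hr)
  refine ⟨{
    carrier := {a : K | ∀ r ∈ R, a * r ∈ R}
    mul_mem' := fun {a b} ha hb r hr => by
      rw [mul_assoc]; exact ha _ (hb r hr)
    one_mem' := fun r hr => by simpa using hr
    add_mem' := fun {a b} ha hb r hr => by
      rw [add_mul]; exact R.add_mem (ha r hr) (hb r hr)
    zero_mem' := fun r hr => by simpa using R.zero_mem
    neg_mem' := fun {a} ha r hr => by
      rw [neg_mul]; exact R.neg_mem (ha r hr)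
    inv_mem' := fun a ha r hr => by
      rcases eq_or_ne a 0 with rfl | h0
      · simpa using R.zero_mem
      · have key : (a⁻¹) ^ p * (a ^ (p - 1) * r) ∈ R := hRmul _ _ (pow_stab a ha (p - 1) r hr)
        have heq : (a⁻¹) ^ p * (a ^ (p - 1) * r) = a⁻¹ * r := by
          rw [← mul_assoc]
          congr 1
          have hp1 : p = (p - 1) + 1 := (Nat.succ_pred_eq_of_pos hp.pos).symm
          rw [hp1, pow_succ, inv_pow]
          field_simp
          rw [Nat.add_sub_cancel]
        rwa [heq] at key
  }, rfl, fun x r hr => hRmul x r hr, fun a ha r hr => ha r hr⟩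

end
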